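/- Let P be a finite poset with connected comparability graph, d ≥ 2, and suppose x_j and x_k are two incomparable elements of P. Then the vector (d−1)e_j + e_k lies in ℤA_P ∩ ℚ_{≥0}A_P but not in the monoid ℤ_{≥0}A_P generated by the vectors ρ(C). In particular, the monoid ℤ_{≥0}A_P is not normal (not saturated in ℤA_P). -/

import Mathlib

/-- The comparability graph of a poset. -/
def compGraph (α : Type*) [PartialOrder α] : SimpleGraph α where
  Adj a b := a ≠ b ∧ (a ≤ b ∨ b ≤ a)
  symm := ⟨fun _ _ h => ⟨h.1.symm, h.2.symm⟩⟩
  loopless := ⟨fun _ h => h.1 rfl⟩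

/-- A multichain of length `d - 1`: a multiset of `d` pairwise comparable elements. -/
def IsMultichain {α : Type*} [PartialOrder α] (d : ℕ) (C : Multiset α) : Prop :=
  Multiset.card C = d ∧ ∀ a ∈ C, ∀ b ∈ C, a ≤ b ∨ b ≤ a

/-- `ρ(C)`: the integer vector of multiplicities of `C`. -/
def rho {α : Type*} [DecidableEq α] (C : Multiset α) : α → ℤ :=
  fun a => (C.count a : ℤ)

/-- `ρ(C)` as a rational vector. -/
def rhoQ {α : Type*} [DecidableEq α] (C : Multiset α) : α → ℚ :=
  fun a => (C.count a : ℚ)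

/-- The rational cone `ℚ_{≥0} A_P` generated by the vectors `ρ(C)`. -/
def coneQ (α : Type*) [Fintype α] [DecidableEq α] [PartialOrder α] (d : ℕ) :
    Set (α → ℚ) :=
  { q | ∃ (m : ℕ) (C : Fin m → Multiset α) (c : Fin m → ℚ),
      (∀ k, IsMultichain d (C k) ∧ 0 ≤ c k) ∧ q = ∑ k, c k • rhoQ (C k) }


section Aux
variable {α : Type*} [Fintype α] [DecidableEq α] [PartialOrder α]

lemma rho_replicate (d : ℕ) (x : α) :
    rho (Multiset.replicate d x) = (d : ℤ) • Pi.single x 1 := by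
  funext t
  simp only [rho, Multiset.count_replicate, Pi.smul_apply, Pi.single_apply, smul_eq_mul]
  rcases eq_or_ne t x with rfl | h
  · simp
  · simp [h, Ne.symm h]

lemma mc_replicate (d : ℕ) (x : α) : IsMultichain d (Multiset.replicate d x) := by
  refine ⟨by simp, ?_⟩
  intro p hp q hq
  rw [Multiset.eq_of_mem_replicate hp, Multiset.eq_of_mem_replicate hq]
  exact Or.inl le_rfl

lemma mc_mix {d : ℕ} (hd : 1 ≤ d) {x y : α} (h : x ≤ y ∨ y ≤ x) :
    IsMultichain d (y ::ₘ Multiset.replicate (d - 1) x) := by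
  refine ⟨by simp; omega, ?_⟩
  intro p hp q hq
  have Hp : p = y ∨ p = x := by
    rcases Multiset.mem_cons.mp hp with h' | h'
    exacts [Or.inl h', Or.inr (Multiset.eq_of_mem_replicate h')]
  have Hq : q = y ∨ q = x := by
    rcases Multiset.mem_cons.mp hq with h' | h'
    exacts [Or.inl h', Or.inr (Multiset.eq_of_mem_replicate h')]
  rcases Hp with rfl | rfl <;> rcases Hq with rfl | rfl
  · exact Or.inl le_rfl
  · exact h.symm
  · exact h
  · exact Or.inl le_rfl

lemma rho_mix {d : ℕ} (hd : 1 ≤ d) {x y : α} (hxy : x ≠ y) :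
    rho (y ::ₘ Multiset.replicate (d - 1) x) = (d - 1 : ℤ) • Pi.single x 1 + Pi.single y 1 := by
  funext t
  simp only [rho, Multiset.count_cons, Multiset.count_replicate, Pi.add_apply, Pi.smul_apply,
    Pi.single_apply, smul_eq_mul]
  rcases eq_or_ne t x with rfl | htx
  · rcases eq_or_ne t y with rfl | hty
    · exact absurd rfl hxy
    · simp [hty]; push_cast [Nat.cast_sub hd]; ring
  · rcases eq_or_ne t y with rfl | hty
    · simp [htx, Ne.symm htx]
    · simp [htx, hty, Ne.symm htx, Ne.symm hty]

lemma sum_rho (d : ℕ) {C : Multiset α} (hC : IsMultichain d C) :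
    ∑ x, rho C x = (d : ℤ) := by
  have h1 : ∑ x, C.count x = Multiset.card C := by
    rw [← Multiset.toFinset_sum_count_eq]
    refine (Finset.sum_subset (Finset.subset_univ _) ?_).symm
    intro x _ hx
    exact Multiset.count_eq_zero_of_notMem (fun h => hx (Multiset.mem_toFinset.mpr h))
  simp only [rho]
  rw [← Nat.cast_sum, h1, hC.1]

end Aux

theorem stmt7 (α : Type*) [Fintype α] [DecidableEq α] [PartialOrder α]
    (d : ℕ) (hd : 2 ≤ d) (hconn : (compGraph α).Connected)
    (a b : α) (hab : a ≠ b) (hinc : ¬ (a ≤ b ∨ b ≤ a)) :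
    ((d - 1 : ℤ) • Pi.single a 1 + Pi.single b 1 ∈
        AddSubgroup.closure { v | ∃ C : Multiset α, IsMultichain d C ∧ v = rho C }) ∧
    ((fun x => (((d - 1 : ℤ) • Pi.single a 1 + Pi.single b 1 : α → ℤ) x : ℚ)) ∈
        coneQ α d) ∧
    ((d - 1 : ℤ) • Pi.single a 1 + Pi.single b 1 ∉
        AddSubmonoid.closure { v | ∃ C : Multiset α, IsMultichain d C ∧ v = rho C }) ∧
    ¬ (∀ z : α → ℤ,
        z ∈ AddSubmonoid.closure { v | ∃ C : Multiset α, IsMultichain d C ∧ v = rho C } ↔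
        (z ∈ AddSubgroup.closure { v | ∃ C : Multiset α, IsMultichain d C ∧ v = rho C } ∧
          (fun x => (z x : ℚ)) ∈ coneQ α d)) := by
  have hd1 : 1 ≤ d := le_trans (by norm_num) hd
  set S : Set (α → ℤ) := { v | ∃ C : Multiset α, IsMultichain d C ∧ v = rho C } with hS
  set v : α → ℤ := (d - 1 : ℤ) • Pi.single a 1 + Pi.single b 1 with hv
  -- group membership of single x - single y for comparable x ≠ y
  have key : ∀ x y : α, x ≠ y → (x ≤ y ∨ y ≤ x) →
      Pi.single x (1:ℤ) - Pi.single y 1 ∈ AddSubgroup.closure S := by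
    intro x y hxy hcomp
    have h1 : rho (Multiset.replicate d x) ∈ AddSubgroup.closure S :=
      AddSubgroup.subset_closure ⟨_, mc_replicate d x, rfl⟩
    have h2 : rho (y ::ₘ Multiset.replicate (d - 1) x) ∈ AddSubgroup.closure S :=
      AddSubgroup.subset_closure ⟨_, mc_mix hd1 hcomp, rfl⟩
    have := AddSubgroup.sub_mem _ h1 h2
    rw [rho_replicate, rho_mix hd1 hxy] at this
    have heq : (d : ℤ) • (Pi.single x 1 : α → ℤ) -
        ((d - 1 : ℤ) • Pi.single x 1 + Pi.single y 1) =
        (Pi.single x 1 : α → ℤ) - Pi.single y 1 := by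
      funext t; simp only [Pi.sub_apply, Pi.add_apply, Pi.smul_apply, smul_eq_mul]; ring
    rwa [heq] at this
  -- along walks
  have walk : ∀ x y : α, Pi.single x (1:ℤ) - Pi.single y 1 ∈ AddSubgroup.closure S := by
    intro x y
    obtain ⟨w⟩ := hconn x y
    induction w with
    | nil => simpa using AddSubgroup.zero_mem _
    | @cons u p q hadj wpq ih =>
        have h1 := key u p (show u ≠ p ∧ (u ≤ p ∨ p ≤ u) from hadj).1
          (show u ≠ p ∧ (u ≤ p ∨ p ≤ u) from hadj).2
        have := AddSubgroup.add_mem _ h1 ih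
        have heq : (Pi.single u 1 : α → ℤ) - Pi.single p 1 +
            ((Pi.single p 1 : α → ℤ) - Pi.single q 1) =
            (Pi.single u 1 : α → ℤ) - Pi.single q 1 := by
          funext t; simp only [Pi.sub_apply, Pi.add_apply]; ring
        rwa [heq] at this
  have H1 : v ∈ AddSubgroup.closure S := by
    have h1 : rho (Multiset.replicate d a) ∈ AddSubgroup.closure S :=
      AddSubgroup.subset_closure ⟨_, mc_replicate d a, rfl⟩
    have h2 := walk a b
    have := AddSubgroup.sub_mem _ h1 h2
    rw [rho_replicate] at this
    have heq : (d : ℤ) • (Pi.single a 1 : α → ℤ) -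
        ((Pi.single a 1 : α → ℤ) - Pi.single b 1) = v := by
      rw [hv]; funext t
      simp only [Pi.sub_apply, Pi.add_apply, Pi.smul_apply, smul_eq_mul]; ring
    rwa [heq] at this
  have H2 : (fun x => ((v x : ℤ) : ℚ)) ∈ coneQ α d := by
    refine ⟨2, ![Multiset.replicate d a, Multiset.replicate d b],
      ![(d - 1 : ℚ) / d, 1 / d], ?_, ?_⟩
    · have hd0 : (0:ℚ) < d := by
        have : 0 < d := by omega
        exact_mod_cast this
      have hd1Q : (1:ℚ) ≤ d := by exact_mod_cast hd1
      intro k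
      fin_cases k
      · exact ⟨mc_replicate d a, div_nonneg (by linarith) hd0.le⟩
      · exact ⟨mc_replicate d b, div_nonneg zero_le_one hd0.le⟩
    · funext t
      have hd0 : (0:ℚ) < d := by
        have : 0 < d := by omega
        exact_mod_cast this
      simp only [hv, Fin.sum_univ_two, Matrix.cons_val_zero, Matrix.cons_val_one,
        Matrix.head_cons, Pi.add_apply, Pi.smul_apply, rhoQ, Multiset.count_replicate,
        Pi.single_apply, smul_eq_mul]
      push_cast
      rcases eq_or_ne t a with rfl | hta
      · simp only [if_pos rfl, if_neg hab, if_neg (Ne.symm hab)]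
        field_simp
        simp only [↓reduceIte]; ring
      · rcases eq_or_ne t b with rfl | htb
        · simp only [if_pos rfl, if_neg hta, if_neg (Ne.symm hta)]
          field_simp
          simp only [↓reduceIte]; ring
        · simp only [if_neg hta, if_neg htb, if_neg (Ne.symm hta), if_neg (Ne.symm htb)]
          ring
  have H3 : v ∉ AddSubmonoid.closure S := by
    intro hmem
    have Q : ∀ z ∈ AddSubmonoid.closure S, (∀ x, 0 ≤ z x) ∧
        (z = 0 ∨ (∃ C, IsMultichain d C ∧ z = rho C) ∨ (2 * d : ℤ) ≤ ∑ x, z x) := by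
      intro z hz
      induction hz using AddSubmonoid.closure_induction with
      | mem w hw =>
          obtain ⟨C, hC, rfl⟩ := hw
          exact ⟨fun x => by simp [rho], Or.inr (Or.inl ⟨C, hC, rfl⟩)⟩
      | zero => exact ⟨fun x => le_rfl, Or.inl rfl⟩
      | add w z hw hz ihw ihz =>
          refine ⟨fun x => add_nonneg (ihw.1 x) (ihz.1 x), ?_⟩
          rcases ihw.2 with rfl | hw' | hw'
          · simpa using ihz.2
          · rcases ihz.2 with rfl | hz' | hz'
            · simp; exact Or.inr (Or.inl hw')
            · refine Or.inr (Or.inr ?_)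
              obtain ⟨C, hC, rfl⟩ := hw'
              obtain ⟨D, hD, rfl⟩ := hz'
              rw [show ∑ x, (rho C + rho D) x = (∑ x, rho C x) + ∑ x, rho D x by
                simp [Finset.sum_add_distrib], sum_rho d hC, sum_rho d hD]
              ring_nf; rfl
            · refine Or.inr (Or.inr ?_)
              obtain ⟨C, hC, rfl⟩ := hw'
              calc (2 * d : ℤ) ≤ 0 + ∑ x, z x := by
                    simpa using hz'
                _ ≤ (∑ x, rho C x) + ∑ x, z x := by
                    gcongr
                    exact Finset.sum_nonneg fun x _ => by simp [rho]
                _ = ∑ x, (rho C + z) x := by simp [Finset.sum_add_distrib]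
          · refine Or.inr (Or.inr ?_)
            calc (2 * d : ℤ) ≤ (∑ x, w x) + 0 := by simpa using hw'
              _ ≤ (∑ x, w x) + ∑ x, z x := by
                  gcongr
                  exact Finset.sum_nonneg fun x _ => ihz.1 x
              _ = ∑ x, (w + z) x := by simp [Finset.sum_add_distrib]
    obtain ⟨hnn, hcase⟩ := Q v hmem
    have hvb : v b = 1 := by
      simp [hv, Pi.single_apply, Ne.symm hab]
    have hva : v a = (d : ℤ) - 1 := by
      simp [hv, Pi.single_apply, hab]
    have hsum : ∑ x, v x = (d : ℤ) := by
      simp only [hv, Pi.add_apply, Pi.smul_apply, smul_eq_mul]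
      rw [Finset.sum_add_distrib]
      have h1 : ∑ x, Pi.single a (1:ℤ) x = 1 := by
        simp [Pi.single_apply]
      have h2 : ∑ x, Pi.single b (1:ℤ) x = 1 := by
        simp [Pi.single_apply]
      rw [← Finset.mul_sum, h1, h2]; ring
    rcases hcase with h0 | ⟨C, hC, hvC⟩ | hbig
    · have := congrFun h0 b
      rw [hvb] at this; simp at this
    · have ha : a ∈ C := by
        rw [← Multiset.count_pos]
        have h' : (0 : ℤ) < rho C a := by
          rw [← hvC, hva]; omega
        simp only [rho] at h'
        exact_mod_cast h'
      have hb : b ∈ C := by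
        rw [← Multiset.count_pos]
        have h' : (0 : ℤ) < rho C b := by
          rw [← hvC, hvb]; norm_num
        simp only [rho] at h'
        exact_mod_cast h'
      exact hinc (hC.2 a ha b hb)
    · rw [hsum] at hbig; omega
  exact ⟨H1, H2, H3, fun h => H3 ((h v).mpr ⟨H1, H2⟩)⟩
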